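/- Let P be an R-labeled poset of rank n and let M be a maximal chain in P with u(M) = a·b^j for some j ≥ 0 (so n = j+1). Then ω(u(M)) = Σ_{E ⊆ {1,…,j+1}} y^{#E}·u(M,E); explicitly, for j ≥ 1 this says (ab + y·ba + y·ab + y²·ba)(b + y·a)^{j−1} = Σ_{E ⊆ {1,…,j+1}} y^{#E}·u(M,E), and for j = 0 it says a + y·b = Σ_{E ⊆ {1}} y^{#E}·u(M,E). -/

import Mathlib

open Finset
open scoped Classical

noncomputable section

/-- Words in the noncommuting letters `a`, `b`; `false` encodes `a`, `true` encodes `b`. -/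
abbrev ABWord : Type := FreeMonoid Bool

/-- Polynomials in a central (commuting) variable `y` and noncommuting variables `a`, `b`,
realized as the monoid algebra of the free monoid on `{a,b}` over `ℤ[y]`. -/
abbrev ABPoly : Type := MonoidAlgebra (Polynomial ℤ) ABWord

/-- The letter `a`. -/
def lA : ABPoly := MonoidAlgebra.single (FreeMonoid.of false) 1

/-- The letter `b`. -/
def lB : ABPoly := MonoidAlgebra.single (FreeMonoid.of true) 1

/-- The central variable `y`. -/
def lY : ABPoly := MonoidAlgebra.single 1 Polynomial.X

/-- The scalar `p ∈ ℤ[y]` inside `ABPoly`. -/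
def scal (p : Polynomial ℤ) : ABPoly := MonoidAlgebra.single 1 p

/-- The ab-word attached to `v : Fin n → Bool`. -/
def wordOf {n : ℕ} (v : Fin n → Bool) : ABWord := FreeMonoid.ofList (List.ofFn v)

/-- The ab-monomial attached to `v : Fin n → Bool`. -/
def abMono {n : ℕ} (v : Fin n → Bool) : ABPoly := MonoidAlgebra.single (wordOf v) 1

/-- The substitution ω on an ab-word: every occurrence of the factor `ab` is replaced by
`ab + y·ba + y·ab + y²·ba`, and every remaining occurrence of `a` (resp. `b`) is replaced
by `a + y·b` (resp. `b + y·a`). -/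
def omegaWord : List Bool → ABPoly
  | [] => 1
  | false :: true :: l =>
      (lA * lB + lY * (lB * lA) + lY * (lA * lB) + lY * lY * (lB * lA)) * omegaWord l
  | false :: l => (lA + lY * lB) * omegaWord l
  | true :: l => (lB + lY * lA) * omegaWord l

/-- The substitution ω, extended linearly to ab-polynomials. -/
def omegaSub (f : ABPoly) : ABPoly :=
  f.coeff.sum fun w p => scal p * omegaWord (FreeMonoid.toList w)

/-- The map ι deleting the first letter of every ab-monomial. -/
def iotaSub (f : ABPoly) : ABPoly :=
  f.coeff.sum fun w p => MonoidAlgebra.single (FreeMonoid.ofList (FreeMonoid.toList w).tail) p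

/-- Evaluation of the central variable `y` at `c`. -/
def evalY (c : ℤ) (f : ABPoly) : ABPoly :=
  f.coeff.sum fun w p => MonoidAlgebra.single w (Polynomial.C (Polynomial.eval c p))

/-- For `E ⊆ {1,…,n}`, the set `I_E` of positions where a block outside `E` ends. -/
def IE (E : Finset ℕ) (n : ℕ) : Finset ℕ :=
  (Finset.Icc 1 n).filter fun i => i ∉ E ∧ i + 1 ∈ E

/-- For `E ⊆ {1,…,n}`, the set `J_E` of positions where a block inside `E` ends. -/
def JE (E : Finset ℕ) (n : ℕ) : Finset ℕ :=
  (Finset.Icc 1 n).filter fun i => i ∈ E ∧ i + 1 ∉ E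

section Poset

variable {P : Type} [Fintype P] [PartialOrder P] [BoundedOrder P]

/-- `P` is graded of rank `n` with rank function `rk`: the bottom has rank `0`, the top has
rank `n`, and ranks increase by one along cover relations (so every maximal chain from `⊥`
to `X` has length `rk X`). -/
def GradedRank (rk : P → ℕ) (n : ℕ) : Prop :=
  rk (⊥ : P) = 0 ∧ rk (⊤ : P) = n ∧ ∀ x y : P, x ⋖ y → rk y = rk x + 1

/-- `mu` is the Möbius function of `P`. -/
def IsMoebius (mu : P → P → ℤ) : Prop :=
  (∀ x : P, mu x x = 1) ∧
    ∀ x y : P, x < y → mu x y = -∑ z ∈ univ.filter fun z => x ≤ z ∧ z < y, mu x z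

/-- `l` is a saturated chain from `x` to `y` with weakly increasing labels. -/
def RisingSatChain (lam : P → P → ℕ) (x y : P) (l : List P) : Prop :=
  l.head? = some x ∧ l.getLast? = some y ∧ List.Chain' (· ⋖ ·) l ∧
    List.Chain' (· ≤ ·) (List.zipWith lam l l.tail)

/-- `lam` is an R-labeling of `P`: it takes positive values on cover relations, and every
interval has a unique maximal (saturated) chain with weakly increasing labels. -/
def IsRLabeling (lam : P → P → ℕ) : Prop :=
  (∀ x y : P, x ⋖ y → 0 < lam x y) ∧
    ∀ x y : P, x ≤ y → ∃! l : List P, RisingSatChain lam x y l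

/-- The Poincaré polynomial `Poin(P;y) = ∑_X |μ(⊥,X)| y^{rk X}`. -/
def poinPoly (mu : P → P → ℤ) (rk : P → ℕ) : Polynomial ℤ :=
  ∑ x : P, Polynomial.C |mu ⊥ x| * Polynomial.X ^ rk x

/-- The Poincaré polynomial of the interval `[x,y]`. -/
def intervalPoin (mu : P → P → ℤ) (rk : P → ℕ) (x y : P) : Polynomial ℤ :=
  ∑ z ∈ univ.filter fun z => x ≤ z ∧ z ≤ y,
    Polynomial.C |mu x z| * Polynomial.X ^ (rk z - rk x)

/-- The successor of `x` in the chain `C` (and `⊤` if `x` is the largest element of `C`). -/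
def chainNext (C : Finset P) (x : P) : P :=
  if h : ∃ y, y ∈ C ∧ x < y ∧ ∀ z ∈ C, x < z → y ≤ z then h.choose else ⊤

/-- The chain Poincaré polynomial `Poin_C(P;y) = ∏_i Poin([C_i, C_{i+1}]; y)`, with the
convention `C_{k+1} = ⊤`. -/
def chainPoin (mu : P → P → ℤ) (rk : P → ℕ) (C : Finset P) : Polynomial ℤ :=
  ∏ x ∈ C, intervalPoin mu rk x (chainNext C x)

/-- The weight `w_lo ⋯ w_{hi-1}` of a chain `C`, where `w_i = b` if `i ∈ Rank(C)` and
`w_i = a - b` otherwise. -/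
def wtWord (rk : P → ℕ) (C : Finset P) (lo hi : ℕ) : ABPoly :=
  ((List.range' lo (hi - lo)).map fun i => if i ∈ C.image rk then lB else lA - lB).prod

/-- The Poincaré-extended ab-index
`exΨ(P;y,a,b) = ∑_{C chain in P∖{⊤}} Poin_C(P;y) · wt_C(a,b)`. -/
def exPsi (mu : P → P → ℤ) (rk : P → ℕ) (n : ℕ) : ABPoly :=
  ∑ C ∈ univ.filter fun C : Finset P => IsChain (· ≤ ·) (C : Set P) ∧ (⊤ : P) ∉ C,
    scal (chainPoin mu rk C) * wtWord rk C 0 n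

/-- Maximal chains `M₀ ⋖ M₁ ⋖ ⋯ ⋖ M_n` of `P`, encoded as functions `Fin (n+1) → P`. -/
def maxChains (n : ℕ) : Finset (Fin (n + 1) → P) :=
  univ.filter fun M =>
    M 0 = (⊥ : P) ∧ M (Fin.last n) = (⊤ : P) ∧ ∀ i : Fin n, M i.castSucc ⋖ M i.succ

/-- Entry `j` of a maximal chain (with clamping). -/
def idx {n : ℕ} (M : Fin (n + 1) → P) (j : ℕ) : P :=
  M ⟨min j n, Nat.lt_succ_of_le (min_le_right j n)⟩

/-- The ab-word `u(M) = u₁⋯u_n` of a maximal chain: `u₁ = a`, and for `i ≥ 2`, `u_i = a`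
iff `λ(M_{i-2},M_{i-1}) ≤ λ(M_{i-1},M_i)`.  Position `i` is encoded by `j = i - 1 : Fin n`. -/
def uStat (lam : P → P → ℕ) {n : ℕ} (M : Fin (n + 1) → P) (j : Fin n) : Bool :=
  if j.1 = 0 then false
  else !decide (lam (idx M (j.1 - 1)) (idx M j.1) ≤ lam (idx M j.1) (idx M (j.1 + 1)))

/-- The ab-word `u(M,E) = v₁⋯v_n`, obtained from `u(M)` by turning `a` into `b` at every
position in `E` and turning `b` into `a` at every position directly following a position
in `E`.  Position `i ∈ {1,…,n}` is encoded by `j = i - 1 : Fin n`. -/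
def uStatE (lam : P → P → ℕ) {n : ℕ} (M : Fin (n + 1) → P) (E : Finset (Fin n))
    (j : Fin n) : Bool :=
  if uStat lam M j then
    if h : 0 < j.1 then
      (if (⟨j.1 - 1, Nat.lt_of_le_of_lt (Nat.sub_le j.1 1) j.2⟩ : Fin n) ∈ E then false
       else true)
    else true
  else if j ∈ E then true else false

/-- The label of the `j`-th cover relation of a maximal chain. -/
def labSeq (lam : P → P → ℕ) {n : ℕ} (M : Fin (n + 1) → P) (j : ℕ) : ℕ :=
  lam (idx M j) (idx M (j + 1))

/-- The labels of `M` strictly decrease along positions `lo,…,hi`. -/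
def StrictDecOn (lam : P → P → ℕ) {n : ℕ} (M : Fin (n + 1) → P) (lo hi : ℕ) : Prop :=
  ∀ j : ℕ, lo ≤ j → j + 2 ≤ hi → labSeq lam M (j + 1) < labSeq lam M j

/-- The labels of `M` weakly increase along positions `lo,…,hi`. -/
def WeakIncOn (lam : P → P → ℕ) {n : ℕ} (M : Fin (n + 1) → P) (lo hi : ℕ) : Prop :=
  ∀ j : ℕ, lo ≤ j → j + 2 ≤ hi → labSeq lam M j ≤ labSeq lam M (j + 1)

/-- `(C,D)` is an interlacing pair: `C` is a chain, `D` a multichain, and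
`C₁ ≤ D₁ ≤ C₂ ≤ D₂ ≤ ⋯ ≤ C_k ≤ D_k`. -/
def Interlacing {k : ℕ} (C D : Fin k → P) : Prop :=
  StrictMono C ∧ Monotone D ∧ (∀ i, C i ≤ D i) ∧
    ∀ (i : ℕ) (h : i + 1 < k), D ⟨i, Nat.lt_of_succ_lt h⟩ ≤ C ⟨i + 1, h⟩

/-- `IRank(C,D) = {r ∈ {1,…,n} : rk C_i < r ≤ rk D_i for some i}`. -/
def IRankSet (rk : P → ℕ) (n : ℕ) {k : ℕ} (C D : Fin k → P) : Finset ℕ :=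
  (Finset.Icc 1 n).filter fun r => ∃ i, rk (C i) < r ∧ r ≤ rk (D i)

/-- `irank(C,D) = #IRank(C,D)`. -/
def irank (rk : P → ℕ) (n : ℕ) {k : ℕ} (C D : Fin k → P) : ℕ := (IRankSet rk n C D).card

/-- `IncDec(C,D)`: the maximal chains of `P` refining `C₁ ≤ D₁ ≤ ⋯ ≤ C_k ≤ D_k` whose labels
strictly decrease along every interval `[C_i, D_i]` and weakly increase along `[⊥, C₁]`,
every `[D_i, C_{i+1}]`, and `[D_k, ⊤]`. -/
def IncDecSet (lam : P → P → ℕ) (rk : P → ℕ) (n : ℕ) {k : ℕ} (C D : Fin k → P) :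
    Finset (Fin (n + 1) → P) :=
  (maxChains n).filter fun M =>
    (∀ i, ∃ j, M j = C i) ∧ (∀ i, ∃ j, M j = D i) ∧
    (∀ i, StrictDecOn lam M (rk (C i)) (rk (D i))) ∧
    ∀ i : ℕ, ∀ hik : i ≤ k,
      WeakIncOn lam M
        (if h : 0 < i then rk (D ⟨i - 1, by omega⟩) else 0)
        (if h : i < k then rk (C ⟨i, h⟩) else n)

/-- The set `A_ℓ(S)` of triples `(C,D,M)` with `(C,D)` interlacing, `Rank(C) = S`,
`irank(C,D) = ℓ`, and `M ∈ IncDec(C,D)`. -/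
def ASet (lam : P → P → ℕ) (rk : P → ℕ) (n ℓ : ℕ) (S : Finset ℕ) :
    Finset ((Fin S.card → P) × (Fin S.card → P) × (Fin (n + 1) → P)) :=
  univ.filter fun t =>
    Interlacing t.1 t.2.1 ∧ (univ.image fun i => rk (t.1 i)) = S ∧
      irank rk n t.1 t.2.1 = ℓ ∧ t.2.2 ∈ IncDecSet lam rk n t.1 t.2.1

/-- The underlying set of a chain. -/
def toFS {k : ℕ} (C : Fin k → P) : Finset P := univ.image C

/-- The underlying multiset of a multichain. -/
def toMS {k : ℕ} (C : Fin k → P) : Multiset P := Multiset.map C univ.val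

/-- The set `B_ℓ(T) = A_ℓ(T) ∖ ⋃_{S ⊊ T} φ_{S,T}(A_ℓ(S))`, where
`φ_{S,T}(C,D,M) = (C ∪ {M_r : r ∈ T∖S}, D ∪ {M_r : r ∈ T∖S}, M)`. -/
def BSet (lam : P → P → ℕ) (rk : P → ℕ) (n ℓ : ℕ) (T : Finset ℕ) :
    Finset ((Fin T.card → P) × (Fin T.card → P) × (Fin (n + 1) → P)) :=
  (ASet lam rk n ℓ T).filter fun t =>
    ¬∃ S : Finset ℕ, S ⊂ T ∧ ∃ C₀ D₀ : Fin S.card → P,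
      (C₀, D₀, t.2.2) ∈ ASet lam rk n ℓ S ∧
      toMS t.1 = toMS C₀ + Multiset.map (fun r => idx t.2.2 r) (T \ S).val ∧
      toMS t.2.1 = toMS D₀ + Multiset.map (fun r => idx t.2.2 r) (T \ S).val

/-- The set `T(M,E)` of positions `i ∈ {0,…,n-1}` with `i,i+1 ∈ E` and `u_{i+1} = a`, or
`i,i+1 ∉ E` and `u_{i+1} = b`. -/
def TME (lam : P → P → ℕ) {n : ℕ} (M : Fin (n + 1) → P) (E : Finset ℕ) : Finset ℕ :=
  (Finset.range n).filter fun i =>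
    (i ∈ E ∧ i + 1 ∈ E ∧ ∀ h : i < n, uStat lam M ⟨i, h⟩ = false) ∨
    (i ∉ E ∧ i + 1 ∉ E ∧ ∀ h : i < n, uStat lam M ⟨i, h⟩ = true)

/-- `IL_{M,E}`: interlacing pairs `(C,D)` (recorded by the underlying set of `C` and the
underlying multiset of `D`) with `IRank(C,D) = E` and `M ∈ IncDec(C,D)`. -/
def ILME (lam : P → P → ℕ) (rk : P → ℕ) (n : ℕ) (M : Fin (n + 1) → P) (E : Finset ℕ) :
    Set (Finset P × Multiset P) :=
  {p | ∃ (k : ℕ) (C D : Fin k → P), Interlacing C D ∧ p.1 = toFS C ∧ p.2 = toMS D ∧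
    IRankSet rk n C D = E ∧ M ∈ IncDecSet lam rk n C D}

/-- The chain `C_R = {M_i : i ∈ I_E ∪ R}`. -/
def CR {n : ℕ} (M : Fin (n + 1) → P) (E R : Finset ℕ) : Finset P :=
  (IE E n ∪ R).image fun r => idx M r

/-- The multichain `D_R = {{M_i : i ∈ J_E ⊔ R}}` (multiset union). -/
def DR {n : ℕ} (M : Fin (n + 1) → P) (E R : Finset ℕ) : Multiset P :=
  Multiset.map (fun r => idx M r) ((JE E n).val + R.val)

/-- The numerator polynomial
`Num(P;y,t) = ∑_{C chain in P∖{⊥,⊤}} Poin_{{⊥}∪C}(P;y) t^{#C} (1-t)^{n-1-#C}`,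
an element of `ℤ[y][t]` (outer variable `t`, inner variable `y`). -/
def NumPoly (mu : P → P → ℤ) (rk : P → ℕ) (n : ℕ) : Polynomial (Polynomial ℤ) :=
  ∑ C ∈ univ.filter fun C : Finset P =>
      IsChain (· ≤ ·) (C : Set P) ∧ (⊥ : P) ∉ C ∧ (⊤ : P) ∉ C,
    Polynomial.C (chainPoin mu rk (insert ⊥ C)) * Polynomial.X ^ C.card *
      (1 - Polynomial.X) ^ (n - 1 - C.card)

/-- The chain Poincaré polynomial of a chain given as `C : Fin k → P`. -/
def funChainPoin (mu : P → P → ℤ) (rk : P → ℕ) {k : ℕ} (C : Fin k → P) : Polynomial ℤ :=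
  ∏ i : Fin k, intervalPoin mu rk (C i) (if h : i.1 + 1 < k then C ⟨i.1 + 1, h⟩ else ⊤)

end Poset


/-! ### Auxiliary material for statement 19 -/

namespace St19

lemma omegaWord_nil : omegaWord [] = 1 := rfl
lemma omegaWord_false : omegaWord [false] = (lA + lY * lB) * omegaWord [] := rfl
lemma omegaWord_true_cons (l : List Bool) :
    omegaWord (true :: l) = (lB + lY * lA) * omegaWord l := rfl
lemma omegaWord_ft (l : List Bool) : omegaWord (false :: true :: l) =
    (lA * lB + lY * (lB * lA) + lY * (lA * lB) + lY * lY * (lB * lA)) * omegaWord l := rfl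

lemma scal_comm (p : Polynomial ℤ) (f : ABPoly) : scal p * f = f * scal p := by
  induction f using MonoidAlgebra.induction_linear with
  | zero => simp
  | add f g hf hg => rw [mul_add, add_mul, hf, hg]
  | single w q =>
    show scal p * MonoidAlgebra.single w q = MonoidAlgebra.single w q * scal p
    simp [scal, MonoidAlgebra.single_mul_single, mul_comm]

def pw (t : Bool) : Polynomial ℤ := if t then Polynomial.X else 1

def midP (t : Bool) : ABPoly := MonoidAlgebra.single (FreeMonoid.of (!t)) (pw t)
def headP (t : Bool) : ABPoly :=
  MonoidAlgebra.single (FreeMonoid.of t * FreeMonoid.of (!t)) (pw t)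
def lastP (t : Bool) : ABPoly := MonoidAlgebra.single 1 (pw t)
def soloP (t : Bool) : ABPoly := MonoidAlgebra.single (FreeMonoid.of t) (pw t)

def tailProd : List Bool → ABPoly
  | [] => 1
  | [t] => lastP t
  | t :: s :: l => midP t * tailProd (s :: l)

def fullProd : List Bool → ABPoly
  | [] => 1
  | [t] => soloP t
  | t :: s :: l => headP t * tailProd (s :: l)

lemma pw_mul_pow (t : Bool) (c : ℕ) :
    pw t * Polynomial.X ^ c = Polynomial.X ^ (c + if (t == true) then 1 else 0) := by
  cases t <;> simp [pw, pow_succ, mul_comm]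

lemma tailKey : ∀ (l : List Bool) (t : Bool),
    tailProd (t :: l) =
      MonoidAlgebra.single (FreeMonoid.ofList (((t :: l).dropLast).map (fun s => !s)))
        (Polynomial.X ^ ((t :: l).count true))
  | [], t => by
    cases t <;> simp [tailProd, lastP, pw, List.count_cons, FreeMonoid.ofList_nil]
  | s :: l, t => by
    rw [show tailProd (t :: s :: l) = midP t * tailProd (s :: l) from rfl, tailKey (l) s,
      midP, MonoidAlgebra.single_mul_single, List.dropLast_cons₂, List.map_cons,
      FreeMonoid.ofList_cons, pw_mul_pow, List.count_cons]
    simp [List.count_cons]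

lemma fullKey : ∀ (l : List Bool) (t : Bool),
    fullProd (t :: l) =
      MonoidAlgebra.single (FreeMonoid.ofList (t :: ((t :: l).dropLast).map (fun s => !s)))
        (Polynomial.X ^ ((t :: l).count true))
  | [], t => by
    cases t <;> simp [fullProd, soloP, pw, List.count_cons, FreeMonoid.ofList_singleton]
  | s :: l, t => by
    rw [show fullProd (t :: s :: l) = headP t * tailProd (s :: l) from rfl, tailKey (l) s,
      headP, MonoidAlgebra.single_mul_single, List.dropLast_cons₂, List.map_cons,
      FreeMonoid.ofList_cons, FreeMonoid.ofList_cons, pw_mul_pow, List.count_cons, mul_assoc]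
    simp [List.count_cons]

lemma sum_pi_succ {R : Type*} [AddCommMonoid R] (n : ℕ) (F : (Fin (n + 1) → Bool) → R) :
    ∑ g : Fin (n + 1) → Bool, F g = ∑ t : Bool, ∑ g : Fin n → Bool, F (Fin.cons t g) := by
  rw [← Equiv.sum_comp (Fin.consEquiv (fun _ => Bool)) F, Fintype.sum_prod_type]
  rfl

def TS (n : ℕ) : ABPoly := ∑ g : Fin n → Bool, tailProd (List.ofFn g)
def FS (n : ℕ) : ABPoly := ∑ g : Fin n → Bool, fullProd (List.ofFn g)

lemma ofFn_cons {n : ℕ} (t : Bool) (g : Fin n → Bool) :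
    List.ofFn (Fin.cons t g) = t :: List.ofFn g := by
  rw [List.ofFn_succ]
  simp

lemma midP_sum : midP true + midP false = lB + lY * lA := by
  simp [midP, lB, lY, lA, pw, MonoidAlgebra.single_mul_single, add_comm]

lemma headP_sum : headP true + headP false = lA * lB + lY * (lB * lA) := by
  simp [headP, lA, lB, lY, pw, MonoidAlgebra.single_mul_single, add_comm]

lemma TS_one : TS 1 = 1 + lY := by
  rw [TS, sum_pi_succ 0, Fintype.sum_bool]
  have h : ∀ (t : Bool) (g : Fin 0 → Bool), tailProd (List.ofFn (Fin.cons t g)) = lastP t := by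
    intro t g
    rw [ofFn_cons]
    simp [tailProd]
  simp only [h, Finset.sum_const, Finset.card_univ]
  simp [lastP, pw, lY, MonoidAlgebra.one_def, add_comm]

lemma TS_succ (n : ℕ) : TS (n + 2) = (lB + lY * lA) * TS (n + 1) := by
  rw [TS, sum_pi_succ]
  have h : ∀ (t : Bool) (g : Fin (n + 1) → Bool),
      tailProd (List.ofFn (Fin.cons t g)) = midP t * tailProd (List.ofFn g) := by
    intro t g
    rw [ofFn_cons, List.ofFn_succ]
    rfl
  simp only [h]
  rw [Fintype.sum_bool, ← Finset.mul_sum, ← Finset.mul_sum, ← add_mul, midP_sum, TS]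

lemma FS_one : FS 1 = lA + lY * lB := by
  rw [FS, sum_pi_succ 0, Fintype.sum_bool]
  have h : ∀ (t : Bool) (g : Fin 0 → Bool), fullProd (List.ofFn (Fin.cons t g)) = soloP t := by
    intro t g
    rw [ofFn_cons]
    simp [fullProd]
  simp only [h, Finset.sum_const, Finset.card_univ]
  simp [soloP, pw, lA, lB, lY, MonoidAlgebra.single_mul_single, add_comm]

lemma FS_succ (n : ℕ) : FS (n + 2) = (lA * lB + lY * (lB * lA)) * TS (n + 1) := by
  rw [FS, sum_pi_succ]
  have h : ∀ (t : Bool) (g : Fin (n + 1) → Bool),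
      fullProd (List.ofFn (Fin.cons t g)) = headP t * tailProd (List.ofFn g) := by
    intro t g
    rw [ofFn_cons, List.ofFn_succ]
    rfl
  simp only [h]
  rw [Fintype.sum_bool, ← Finset.mul_sum, ← Finset.mul_sum, ← add_mul, headP_sum, TS]

lemma TS_pow (m : ℕ) : TS (m + 1) = (lB + lY * lA) ^ m * (1 + lY) := by
  induction m with
  | zero => rw [TS_one, pow_zero, one_mul]
  | succ m ih => rw [TS_succ, ih, ← mul_assoc, ← pow_succ']

lemma oneY : (1 : ABPoly) + lY = scal (1 + Polynomial.X) := by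
  simp [scal, lY, MonoidAlgebra.one_def, Finsupp.single_add]

lemma lY_comm (f : ABPoly) : f * lY = lY * f :=
  (scal_comm Polynomial.X f).symm

lemma Hmul : (lA * lB + lY * (lB * lA)) * (1 + lY) =
    lA * lB + lY * (lB * lA) + lY * (lA * lB) + lY * lY * (lB * lA) := by
  have e1 : lA * lB * lY = lY * (lA * lB) := lY_comm _
  have e2 : lY * (lB * lA) * lY = lY * lY * (lB * lA) := by
    rw [mul_assoc, lY_comm (lB * lA), ← mul_assoc]
  rw [mul_add, mul_one, add_mul, e1, e2]
  abel

lemma FS_main (m : ℕ) : FS (m + 2) =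
    (lA * lB + lY * (lB * lA) + lY * (lA * lB) + lY * lY * (lB * lA)) *
      (lB + lY * lA) ^ m := by
  rw [FS_succ, TS_pow]
  have hC : (lB + lY * lA) ^ m * (1 + lY) = (1 + lY) * (lB + lY * lA) ^ m := by
    rw [oneY, ← scal_comm]
  rw [hC, ← mul_assoc, Hmul]

def EB (n : ℕ) : Finset (Fin n) ≃ (Fin n → Bool) where
  toFun E i := decide (i ∈ E)
  invFun g := univ.filter (fun i => g i = true)
  left_inv E := by ext i; simp
  right_inv g := by funext i; simp

lemma countOfFn : ∀ {n : ℕ} (g : Fin n → Bool),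
    (List.ofFn g).count true = ∑ i, if g i = true then 1 else 0 := by
  intro n
  induction n with
  | zero => intro g; simp
  | succ n ih =>
    intro g
    rw [List.ofFn_succ, List.count_cons, Fin.sum_univ_succ, ih]
    cases h : g 0 <;> simp [h, add_comm]

lemma omegaRep : ∀ m : ℕ, omegaWord (List.replicate m true) = (lB + lY * lA) ^ m
  | 0 => rfl
  | m + 1 => by
    rw [List.replicate_succ, omegaWord_true_cons, omegaRep m, ← pow_succ']

end St19
theorem statement19 {P : Type} [Fintype P] [PartialOrder P] [BoundedOrder P]
    (n : ℕ) (rk : P → ℕ) (lam : P → P → ℕ)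
    (hgrade : GradedRank rk n) (hlam : IsRLabeling lam)
    (M : Fin (n + 1) → P) (hM : M ∈ maxChains (P := P) n)
    (j : ℕ) (hn : n = j + 1)
    (hu : List.ofFn (uStat lam M) = false :: List.replicate j true) :
    (omegaSub (abMono (uStat lam M)) =
      ∑ E : Finset (Fin n), scal (Polynomial.X ^ E.card) * abMono (uStatE lam M E)) ∧
    (j = 0 →
      lA + lY * lB =
        ∑ E : Finset (Fin n), scal (Polynomial.X ^ E.card) * abMono (uStatE lam M E)) ∧
    (1 ≤ j →
      (lA * lB + lY * (lB * lA) + lY * (lA * lB) + lY * lY * (lB * lA)) *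
          (lB + lY * lA) ^ (j - 1) =
        ∑ E : Finset (Fin n), scal (Polynomial.X ^ E.card) * abMono (uStatE lam M E)) := by
  subst hn
  -- the values of `uStat`
  have hu' : ∀ (k : ℕ) (hk : k < j + 1), uStat lam M ⟨k, hk⟩ = decide (k ≠ 0) := by
    intro k hk
    have h1 : (List.ofFn (uStat lam M))[k]'(by simpa using hk) = uStat lam M ⟨k, hk⟩ :=
      List.getElem_ofFn _
    rw [← h1]
    simp only [hu]
    cases k with
    | zero => simp
    | succ k =>
      rw [List.getElem_cons_succ, List.getElem_replicate]
      simp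
  -- the values of `uStatE`
  have hv0 : ∀ (E : Finset (Fin (j + 1))) (hk : (0 : ℕ) < j + 1),
      uStatE lam M E ⟨0, hk⟩ = decide ((⟨0, hk⟩ : Fin (j + 1)) ∈ E) := by
    intro E hk
    rw [uStatE, hu' 0 hk]
    by_cases h : (⟨0, hk⟩ : Fin (j + 1)) ∈ E <;> simp_all
  have hvs : ∀ (E : Finset (Fin (j + 1))) (k : ℕ) (hk : k + 1 < j + 1),
      uStatE lam M E ⟨k + 1, hk⟩ =
        !decide ((⟨k, Nat.lt_of_succ_lt hk⟩ : Fin (j + 1)) ∈ E) := by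
    intro E k hk
    rw [uStatE, hu' (k + 1) hk]
    by_cases h : (⟨k, Nat.lt_of_succ_lt hk⟩ : Fin (j + 1)) ∈ E <;>
      simp [h, Nat.add_sub_cancel]
  -- the per-subset identity
  have key : ∀ E : Finset (Fin (j + 1)),
      scal (Polynomial.X ^ E.card) * abMono (uStatE lam M E) =
        St19.fullProd (List.ofFn (fun i => decide (i ∈ E))) := by
    intro E
    set g : Fin (j + 1) → Bool := fun i => decide (i ∈ E) with hg
    rw [show List.ofFn g = g 0 :: List.ofFn (fun i : Fin j => g i.succ) from List.ofFn_succ (f := g),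
      St19.fullKey, ← List.ofFn_succ (f := g)]
    rw [abMono, scal, wordOf, MonoidAlgebra.single_mul_single, one_mul, mul_one]
    congr 1
    · congr 1
      apply List.ext_getElem
      · simp
      · intro i h1 h2
        match i with
        | 0 =>
          rw [List.getElem_ofFn, List.getElem_cons_zero]
          exact hv0 E (by omega)
        | (k + 1 : ℕ) =>
          rw [List.getElem_ofFn, List.getElem_cons_succ, List.getElem_map,
            List.getElem_dropLast, List.getElem_ofFn]
          have hk : k + 1 < j + 1 := by
            simp at h1; omega
          exact hvs E k hk
    · rw [St19.countOfFn]
      congr 1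
      rw [← Finset.card_filter]
      congr 1
      simp [hg]
  -- the sum over subsets
  have hsum : ∑ E : Finset (Fin (j + 1)), scal (Polynomial.X ^ E.card) * abMono (uStatE lam M E)
      = St19.FS (j + 1) := by
    rw [St19.FS, ← Equiv.sum_comp (St19.EB (j + 1)) (fun g => St19.fullProd (List.ofFn g))]
    exact Finset.sum_congr rfl fun E _ => key E
  -- the left-hand side of the first statement
  have hL : omegaSub (abMono (uStat lam M)) = omegaWord (false :: List.replicate j true) := by
    rw [abMono, omegaSub, MonoidAlgebra.sum_single_index (h := fun w p => scal p * omegaWord (FreeMonoid.toList w)) (by simp [scal]),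
      wordOf, FreeMonoid.toList_ofList, hu]
    simp [scal, ← MonoidAlgebra.one_def]
  refine ⟨?_, ?_, ?_⟩
  · rw [hL, hsum]
    cases j with
    | zero =>
      rw [show List.replicate 0 true = ([] : List Bool) from rfl, St19.omegaWord_false,
        St19.omegaWord_nil, mul_one, St19.FS_one]
    | succ m =>
      rw [List.replicate_succ, St19.omegaWord_ft, St19.omegaRep, St19.FS_main]
  · intro h0
    subst h0
    rw [hsum, St19.FS_one]
  · intro h1
    obtain ⟨m, rfl⟩ : ∃ m, j = m + 1 := ⟨j - 1, (Nat.succ_pred_eq_of_pos h1).symm⟩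
    rw [hsum]
    simp only [Nat.add_sub_cancel]
    exact (St19.FS_main m).symm
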